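/- Let O be any orbit of the permutation g, and let α = |O ∩ [0,q'-2]|, β = |O ∩ {q'-1}|, γ = |O ∩ [q',n-1]|. Then (α+β)·p' = (β+γ)·q'. -/
import Mathlib


def g (p' q' i : ℕ) : ℕ :=
  if i + 1 < q' then i + p' else if i + 1 = q' then p' - 1 else i - q'

theorem stmt_4 (p' q' n : ℕ) (hp : 1 ≤ p') (hq : 1 ≤ q') (hn : p' + q' - 1 = n)
    (i : ℕ) (hi : i < n)
    (O : Set ℕ) (hO : O = {j | j < n ∧ ∃ k : ℕ, (g p' q')^[k] i = j})
    (a b c : ℕ)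
    (ha : a = (O ∩ {j | j + 1 < q'}).ncard)
    (hb : b = (O ∩ {j | j + 1 = q'}).ncard)
    (hc : c = (O ∩ {j | q' ≤ j}).ncard) :
    (a + b) * p' = (b + c) * q' := by
  have hglt : ∀ j, j < n → g p' q' j < n := by
    intro j hj; unfold g; split_ifs <;> omega
  have hginj : ∀ j1 j2, j1 < n → j2 < n → g p' q' j1 = g p' q' j2 → j1 = j2 := by
    intro j1 j2 h1 h2 h; unfold g at h; split_ifs at h <;> omega
  have hOsub : ∀ j ∈ O, j < n := by intro j hj; rw [hO] at hj; exact hj.1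
  have hfin : O.Finite := Set.Finite.subset (Set.finite_Iio n) (fun j hj => hOsub j hj)
  set T := hfin.toFinset with hT
  have hmemT : ∀ j, j ∈ T ↔ j ∈ O := fun j => hfin.mem_toFinset
  have hmaps : ∀ j ∈ T, g p' q' j ∈ T := by
    intro j hj
    rw [hmemT] at hj ⊢
    rw [hO] at hj ⊢
    obtain ⟨hjn, k, hk⟩ := hj
    exact ⟨hglt j hjn, k + 1, by rw [Function.iterate_succ_apply', hk]⟩
  have hinj' : ∀ x ∈ T, ∀ y ∈ T, g p' q' x = g p' q' y → x = y := by
    intro x hx y hy h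
    exact hginj x y (hOsub x ((hmemT x).1 hx)) (hOsub y ((hmemT y).1 hy)) h
  have himg : T.image (g p' q') = T := by
    apply Finset.eq_of_subset_of_card_le
    · intro x hx
      simp only [Finset.mem_image] at hx
      obtain ⟨j, hj, rfl⟩ := hx
      exact hmaps j hj
    · rw [Finset.card_image_of_injOn (fun x hx y hy h => hinj' x hx y hy h)]
  have hsum : ∑ j ∈ T, ((g p' q' j : ℤ)) = ∑ j ∈ T, (j : ℤ) := by
    conv_rhs => rw [← himg]
    rw [Finset.sum_image hinj']
  -- pointwise displacement
  have hdelta : ∀ j ∈ T, (g p' q' j : ℤ) =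
      (j : ℤ) + (if j + 1 < q' then (p' : ℤ) else if j + 1 = q' then (p' : ℤ) - q' else -(q' : ℤ)) := by
    intro j hj
    have hjn := hOsub j ((hmemT j).1 hj)
    unfold g
    split_ifs <;> omega
  have hsum2 : ∑ j ∈ T, ((j : ℤ) +
      (if j + 1 < q' then (p' : ℤ) else if j + 1 = q' then (p' : ℤ) - q' else -(q' : ℤ)))
      = ∑ j ∈ T, (j : ℤ) := by
    rw [← hsum]; exact Finset.sum_congr rfl (fun j hj => (hdelta j hj).symm)
  rw [Finset.sum_add_distrib] at hsum2
  have hsum3 : ∑ j ∈ T,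
      (if j + 1 < q' then (p' : ℤ) else if j + 1 = q' then (p' : ℤ) - q' else -(q' : ℤ)) = 0 := by
    linarith
  -- split the sum
  have hB : Finset.filter (fun j => ¬j + 1 < q' ∧ j + 1 = q') T
      = Finset.filter (fun j => j + 1 = q') T := by
    ext j; simp only [Finset.mem_filter]
    constructor <;> rintro ⟨h1, h2⟩
    · exact ⟨h1, h2.2⟩
    · exact ⟨h1, by omega, h2⟩
  have hC : Finset.filter (fun j => ¬j + 1 < q' ∧ ¬j + 1 = q') T
      = Finset.filter (fun j => q' ≤ j) T := by
    ext j; simp only [Finset.mem_filter]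
    constructor <;> rintro ⟨h1, h2⟩
    · exact ⟨h1, by omega⟩
    · exact ⟨h1, by omega, by omega⟩
  have hsplit : ∀ f : ℕ → ℤ, ∑ j ∈ T, f j =
      ∑ j ∈ T.filter (fun j => j + 1 < q'), f j +
      ∑ j ∈ T.filter (fun j => j + 1 = q'), f j +
      ∑ j ∈ T.filter (fun j => q' ≤ j), f j := by
    intro f
    rw [← Finset.sum_filter_add_sum_filter_not T (fun j => j + 1 < q') f]
    rw [← Finset.sum_filter_add_sum_filter_not (T.filter (fun j => ¬ j + 1 < q'))
      (fun j => j + 1 = q') f, Finset.filter_filter, Finset.filter_filter, add_assoc, hB, hC]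
  rw [hsplit] at hsum3
  have e1 : ∑ j ∈ T.filter (fun j => j + 1 < q'),
      (if j + 1 < q' then (p' : ℤ) else if j + 1 = q' then (p' : ℤ) - q' else -(q' : ℤ))
      = (T.filter (fun j => j + 1 < q')).card * (p' : ℤ) := by
    rw [Finset.sum_congr rfl (fun j hj => by
      rw [if_pos (Finset.mem_filter.1 hj).2]), Finset.sum_const, nsmul_eq_mul]
  have e2 : ∑ j ∈ T.filter (fun j => j + 1 = q'),
      (if j + 1 < q' then (p' : ℤ) else if j + 1 = q' then (p' : ℤ) - q' else -(q' : ℤ))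
      = (T.filter (fun j => j + 1 = q')).card * ((p' : ℤ) - q') := by
    rw [Finset.sum_congr rfl (fun j hj => by
      have := (Finset.mem_filter.1 hj).2
      rw [if_neg (by omega), if_pos this]), Finset.sum_const, nsmul_eq_mul]
  have e3 : ∑ j ∈ T.filter (fun j => q' ≤ j),
      (if j + 1 < q' then (p' : ℤ) else if j + 1 = q' then (p' : ℤ) - q' else -(q' : ℤ))
      = (T.filter (fun j => q' ≤ j)).card * (-(q' : ℤ)) := by
    rw [Finset.sum_congr rfl (fun j hj => by
      have := (Finset.mem_filter.1 hj).2
      rw [if_neg (by omega), if_neg (by omega)]), Finset.sum_const, nsmul_eq_mul]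
  rw [e1, e2, e3] at hsum3
  -- identify cardinalities
  have hca : a = (T.filter (fun j => j + 1 < q')).card := by
    rw [ha, ← Set.ncard_coe_finset]
    congr 1
    ext j
    simp only [Finset.coe_filter, Set.mem_inter_iff, Set.mem_setOf_eq, hmemT j]
  have hcb : b = (T.filter (fun j => j + 1 = q')).card := by
    rw [hb, ← Set.ncard_coe_finset]
    congr 1
    ext j
    simp only [Finset.coe_filter, Set.mem_inter_iff, Set.mem_setOf_eq, hmemT j]
  have hcc : c = (T.filter (fun j => q' ≤ j)).card := by
    rw [hc, ← Set.ncard_coe_finset]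
    congr 1
    ext j
    simp only [Finset.coe_filter, Set.mem_inter_iff, Set.mem_setOf_eq, hmemT j]
  have key : ((a : ℤ) + b) * p' = ((b : ℤ) + c) * q' := by
    rw [hca, hcb, hcc]
    linear_combination hsum3
  have : ((a + b) * p' : ℤ) = ((b + c) * q' : ℤ) := by linear_combination key
  exact_mod_cast this
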